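/- Let X ∈ ℝ^{n×d} have rank d, and suppose Σ̃_X = (1/n)Xᵀ M_n X is invertible, where M_n = I − (1/n)J. Define Σ̃_{XXᵀ} = (1/n)XXᵀ M_n XXᵀ and its pseudo-inverse square root via the spectral decomposition. Then the nonzero singular values of CCA_†(XXᵀ, Z) = Σ̃_{XXᵀ}^{†/2} (1/n) XXᵀ M_n Z Σ̃_Z^{−1/2} coincide with the nonzero singular values of CCA(X,Z) = Σ̃_X^{−1/2} (1/n) Xᵀ M_n Z Σ̃_Z^{−1/2}. -/

import Mathlib

open scoped BigOperators
open Matrix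

/-- The centering matrix `M_n = I − (1/n)J`. -/
noncomputable def centering (n : ℕ) : Matrix (Fin n) (Fin n) ℝ :=
  1 - (n : ℝ)⁻¹ • Matrix.of (fun _ _ => (1 : ℝ))

/-- Inverse square root of a symmetric matrix via the spectral decomposition
(junk value `0` on non-Hermitian input). -/
noncomputable def invSqrt {m : ℕ} (A : Matrix (Fin m) (Fin m) ℝ) :
    Matrix (Fin m) (Fin m) ℝ :=
  if h : A.IsHermitian then
    (h.eigenvectorUnitary : Matrix (Fin m) (Fin m) ℝ) *
      Matrix.diagonal (fun i => (Real.sqrt (h.eigenvalues i))⁻¹) *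
      star (h.eigenvectorUnitary : Matrix (Fin m) (Fin m) ℝ)
  else 0

/-- Pseudo-inverse square root `H^{†/2}` of a symmetric matrix, defined via the
spectral decomposition with zero eigenvalues sent to zero (junk value `0` on
non-Hermitian input). -/
noncomputable def pinvSqrt {m : ℕ} (A : Matrix (Fin m) (Fin m) ℝ) :
    Matrix (Fin m) (Fin m) ℝ :=
  if h : A.IsHermitian then
    (h.eigenvectorUnitary : Matrix (Fin m) (Fin m) ℝ) *
      Matrix.diagonal (fun i =>
        if h.eigenvalues i = 0 then 0 else (Real.sqrt (h.eigenvalues i))⁻¹) *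
      star (h.eigenvectorUnitary : Matrix (Fin m) (Fin m) ℝ)
  else 0

/-- The CCA matrix `Σ̃_X^{−1/2} (1/n) Xᵀ M_n Z Σ̃_Z^{−1/2}`. -/
noncomputable def CCA {n d p : ℕ} (X : Matrix (Fin n) (Fin d) ℝ)
    (Z : Matrix (Fin n) (Fin p) ℝ) : Matrix (Fin d) (Fin p) ℝ :=
  invSqrt ((n : ℝ)⁻¹ • (Xᵀ * centering n * X)) *
    ((n : ℝ)⁻¹ • (Xᵀ * centering n * Z)) *
    invSqrt ((n : ℝ)⁻¹ • (Zᵀ * centering n * Z))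

/-- The regularization-free full-network CCA matrix
`CCA_†(XXᵀ, Z) = Σ̃_{XXᵀ}^{†/2} (1/n) XXᵀ M_n Z Σ̃_Z^{−1/2}`. -/
noncomputable def CCAdagger {n d p : ℕ} (X : Matrix (Fin n) (Fin d) ℝ)
    (Z : Matrix (Fin n) (Fin p) ℝ) : Matrix (Fin n) (Fin p) ℝ :=
  pinvSqrt ((n : ℝ)⁻¹ • (X * Xᵀ * centering n * X * Xᵀ)) *
    ((n : ℝ)⁻¹ • (X * Xᵀ * centering n * Z)) *
    invSqrt ((n : ℝ)⁻¹ • (Zᵀ * centering n * Z))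

/-- The multiset of singular values of a real matrix (square roots of the
eigenvalues of `MᵀM`). -/
noncomputable def singularValuesMultiset {a b : ℕ} (M : Matrix (Fin a) (Fin b) ℝ) :
    Multiset ℝ :=
  Finset.univ.val.map fun i : Fin b =>
    Real.sqrt ((Matrix.isHermitian_conjTranspose_mul_self M).eigenvalues i)

/-- Lemma (fullnettrue:singval): if `X` has rank `d` and the sample covariances
`Σ̃_X` and `Σ̃_Z` are positive definite (hence invertible), then the nonzero singular
values of `CCA_†(XXᵀ, Z)` coincide with the nonzero singular values of `CCA(X, Z)`. -/
noncomputable def specFun {m : ℕ} {H : Matrix (Fin m) (Fin m) ℝ} (hH : H.IsHermitian)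
    (f : Fin m → ℝ) : Matrix (Fin m) (Fin m) ℝ :=
  (hH.eigenvectorUnitary : Matrix (Fin m) (Fin m) ℝ) * Matrix.diagonal f *
    star (hH.eigenvectorUnitary : Matrix (Fin m) (Fin m) ℝ)

lemma specFun_mul {m : ℕ} {H : Matrix (Fin m) (Fin m) ℝ} (hH : H.IsHermitian)
    (f g : Fin m → ℝ) :
    specFun hH f * specFun hH g = specFun hH (fun i => f i * g i) := by
  unfold specFun
  have h1 : star (hH.eigenvectorUnitary : Matrix (Fin m) (Fin m) ℝ) *
      (hH.eigenvectorUnitary : Matrix (Fin m) (Fin m) ℝ) = 1 :=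
    Matrix.UnitaryGroup.star_mul_self _
  calc _ = (hH.eigenvectorUnitary : Matrix (Fin m) (Fin m) ℝ) * Matrix.diagonal f *
      (star (hH.eigenvectorUnitary : Matrix (Fin m) (Fin m) ℝ) *
        (hH.eigenvectorUnitary : Matrix (Fin m) (Fin m) ℝ)) *
      (Matrix.diagonal g * star (hH.eigenvectorUnitary : Matrix (Fin m) (Fin m) ℝ)) := by
        simp only [Matrix.mul_assoc]
    _ = _ := by
        rw [h1, Matrix.mul_one]
        simp only [Matrix.mul_assoc, ← Matrix.mul_assoc (Matrix.diagonal f),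
          Matrix.diagonal_mul_diagonal]

lemma specFun_self {m : ℕ} {H : Matrix (Fin m) (Fin m) ℝ} (hH : H.IsHermitian) :
    H = specFun hH (hH.eigenvalues) := by
  have := hH.spectral_theorem
  simpa [specFun, Function.comp] using this

lemma specFun_one {m : ℕ} {H : Matrix (Fin m) (Fin m) ℝ} (hH : H.IsHermitian) :
    specFun hH (fun _ => 1) = 1 := by
  unfold specFun
  rw [Matrix.diagonal_one, Matrix.mul_one]
  exact (Matrix.mem_unitaryGroup_iff).mp (hH.eigenvectorUnitary).2

lemma specFun_isHermitian {m : ℕ} {H : Matrix (Fin m) (Fin m) ℝ} (hH : H.IsHermitian)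
    (f : Fin m → ℝ) : (specFun hH f).IsHermitian := by
  unfold specFun
  rw [Matrix.star_eq_conjTranspose]
  exact Matrix.isHermitian_mul_mul_conjTranspose _ (Matrix.isHermitian_diagonal f)

lemma specFun_transpose {m : ℕ} {H : Matrix (Fin m) (Fin m) ℝ} (hH : H.IsHermitian)
    (f : Fin m → ℝ) : (specFun hH f)ᵀ = specFun hH f := by
  have := (specFun_isHermitian hH f).eq
  rwa [Matrix.conjTranspose_eq_transpose_of_trivial] at this

lemma specFun_mul_matrix {m : ℕ} {H : Matrix (Fin m) (Fin m) ℝ} (hH : H.IsHermitian)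
    (f : Fin m → ℝ) :
    specFun hH f * H = specFun hH (fun i => f i * hH.eigenvalues i) := by
  calc specFun hH f * H = specFun hH f * specFun hH hH.eigenvalues := by
        rw [← specFun_self hH]
    _ = _ := specFun_mul hH _ _

lemma matrix_mul_specFun {m : ℕ} {H : Matrix (Fin m) (Fin m) ℝ} (hH : H.IsHermitian)
    (f : Fin m → ℝ) :
    H * specFun hH f = specFun hH (fun i => hH.eigenvalues i * f i) := by
  calc H * specFun hH f = specFun hH hH.eigenvalues * specFun hH f := by
        rw [← specFun_self hH]
    _ = _ := specFun_mul hH _ _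

lemma pinvSqrt_eq_specFun {m : ℕ} {H : Matrix (Fin m) (Fin m) ℝ} (hH : H.IsHermitian) :
    pinvSqrt H = specFun hH
      (fun i => if hH.eigenvalues i = 0 then 0 else (Real.sqrt (hH.eigenvalues i))⁻¹) := by
  rw [pinvSqrt, dif_pos hH]; rfl

lemma invSqrt_eq_specFun {m : ℕ} {H : Matrix (Fin m) (Fin m) ℝ} (hH : H.IsHermitian) :
    invSqrt H = specFun hH (fun i => (Real.sqrt (hH.eigenvalues i))⁻¹) := by
  rw [invSqrt, dif_pos hH]; rfl

lemma invSqrt_transpose {m : ℕ} {H : Matrix (Fin m) (Fin m) ℝ} (hH : H.IsHermitian) :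
    (invSqrt H)ᵀ = invSqrt H := by
  rw [invSqrt_eq_specFun hH]; exact specFun_transpose hH _

lemma invSqrt_mul_invSqrt {m : ℕ} {A : Matrix (Fin m) (Fin m) ℝ} (hA : A.PosDef) :
    invSqrt A * invSqrt A = A⁻¹ := by
  have hH := hA.isHermitian
  have hpos : ∀ i, 0 < hH.eigenvalues i := hA.eigenvalues_pos
  have h1 : invSqrt A * invSqrt A = specFun hH (fun i => (hH.eigenvalues i)⁻¹) := by
    rw [invSqrt_eq_specFun hH, specFun_mul]
    apply congrArg; funext i
    rw [← mul_inv, Real.mul_self_sqrt (hpos i).le]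
  symm; apply Matrix.inv_eq_right_inv
  rw [h1, matrix_mul_specFun hH]
  rw [show (fun i => hH.eigenvalues i * (hH.eigenvalues i)⁻¹) = (fun _ => (1:ℝ)) from
    funext fun i => mul_inv_cancel₀ (ne_of_gt (hpos i))]
  exact specFun_one hH

lemma key_proj {n d : ℕ} (Y : Matrix (Fin n) (Fin d) ℝ) (hG : IsUnit (Yᵀ * Y).det) :
    Yᵀ * (pinvSqrt (Y * Yᵀ) * pinvSqrt (Y * Yᵀ)) * Y = 1 := by
  have hpsd : (Y * Yᵀ).PosSemidef := by
    have := Matrix.posSemidef_self_mul_conjTranspose Y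
    rwa [Matrix.conjTranspose_eq_transpose_of_trivial] at this
  have hH : (Y * Yᵀ).IsHermitian := hpsd.isHermitian
  have hev : ∀ i, 0 ≤ hH.eigenvalues i := hpsd.eigenvalues_nonneg
  set e : Fin n → ℝ := fun i => if hH.eigenvalues i = 0 then 0 else 1 with he
  set Pr : Matrix (Fin n) (Fin n) ℝ := specFun hH e with hPr
  have hQH : pinvSqrt (Y * Yᵀ) * pinvSqrt (Y * Yᵀ) * (Y * Yᵀ) = Pr := by
    rw [pinvSqrt_eq_specFun hH, specFun_mul, specFun_mul_matrix hH, hPr]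
    apply congrArg; funext i
    by_cases h : hH.eigenvalues i = 0
    · simp [h, he]
    · simp only [h, if_false, he]
      rw [← mul_inv, Real.mul_self_sqrt (hev i), inv_mul_cancel₀ h]
  have hPrt : Prᵀ = Pr := specFun_transpose hH e
  have e1 : Pr * (Y * Yᵀ) = Y * Yᵀ := by
    rw [hPr, specFun_mul_matrix hH]
    rw [show (fun i => e i * hH.eigenvalues i) = hH.eigenvalues from funext fun i => by
      by_cases h : hH.eigenvalues i = 0 <;> simp [h, he]]
    exact (specFun_self hH).symm
  have e2 : (Y * Yᵀ) * Pr = Y * Yᵀ := by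
    rw [hPr, matrix_mul_specFun hH]
    rw [show (fun i => hH.eigenvalues i * e i) = hH.eigenvalues from funext fun i => by
      by_cases h : hH.eigenvalues i = 0 <;> simp [h, he]]
    exact (specFun_self hH).symm
  have hNz : Y - Pr * Y = 0 := by
    have hNN : (Y - Pr * Y) * (Y - Pr * Y)ᵀ = 0 := by
      rw [Matrix.transpose_sub, Matrix.transpose_mul, hPrt, Matrix.sub_mul,
        Matrix.mul_sub, Matrix.mul_sub]
      have a1 : Y * (Yᵀ * Pr) = Y * Yᵀ := by rw [← Matrix.mul_assoc, e2]
      have a2 : Pr * Y * Yᵀ = Y * Yᵀ := by rw [Matrix.mul_assoc, e1]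
      have a3 : Pr * Y * (Yᵀ * Pr) = Y * Yᵀ := by rw [Matrix.mul_assoc, a1, e1]
      rw [a1, a2, a3]
      simp
    have := Matrix.self_mul_conjTranspose_eq_zero (A := Y - Pr * Y)
    rw [Matrix.conjTranspose_eq_transpose_of_trivial] at this
    exact this.mp hNN
  have hPiY : Pr * Y = Y := (sub_eq_zero.mp hNz).symm
  have h5 : Yᵀ * (pinvSqrt (Y * Yᵀ) * pinvSqrt (Y * Yᵀ)) * Y * (Yᵀ * Y) = Yᵀ * Y := by
    calc Yᵀ * (pinvSqrt (Y * Yᵀ) * pinvSqrt (Y * Yᵀ)) * Y * (Yᵀ * Y)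
        = Yᵀ * ((pinvSqrt (Y * Yᵀ) * pinvSqrt (Y * Yᵀ) * (Y * Yᵀ)) * Y) := by
          simp only [Matrix.mul_assoc]
      _ = Yᵀ * (Pr * Y) := by rw [hQH]
      _ = Yᵀ * Y := by rw [hPiY]
  calc Yᵀ * (pinvSqrt (Y * Yᵀ) * pinvSqrt (Y * Yᵀ)) * Y
      = Yᵀ * (pinvSqrt (Y * Yᵀ) * pinvSqrt (Y * Yᵀ)) * Y * ((Yᵀ * Y) * (Yᵀ * Y)⁻¹) := by
        rw [Matrix.mul_nonsing_inv _ hG, Matrix.mul_one]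
    _ = (Yᵀ * (pinvSqrt (Y * Yᵀ) * pinvSqrt (Y * Yᵀ)) * Y * (Yᵀ * Y)) * (Yᵀ * Y)⁻¹ := by
        simp only [Matrix.mul_assoc]
    _ = (Yᵀ * Y) * (Yᵀ * Y)⁻¹ := by rw [h5]
    _ = 1 := Matrix.mul_nonsing_inv _ hG
lemma pinvSqrt_transpose {m : ℕ} {H : Matrix (Fin m) (Fin m) ℝ} (hH : H.IsHermitian) :
    (pinvSqrt H)ᵀ = pinvSqrt H := by
  rw [pinvSqrt_eq_specFun hH]; exact specFun_transpose hH _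

lemma eigenvalues_congr {p : ℕ} (B C : Matrix (Fin p) (Fin p) ℝ) (hB : B.IsHermitian)
    (hC : C.IsHermitian) (h : B = C) : hB.eigenvalues = hC.eigenvalues := by
  subst h; rfl


lemma centering_transpose (n : ℕ) : (centering n)ᵀ = centering n := by
  unfold centering
  rw [Matrix.transpose_sub, Matrix.transpose_one, Matrix.transpose_smul]
  congr 1

theorem cca_dagger_singular_values (n d p : ℕ) (hn : 0 < n)
    (X : Matrix (Fin n) (Fin d) ℝ) (Z : Matrix (Fin n) (Fin p) ℝ)
    (hrank : X.rank = d)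
    (hX : ((n : ℝ)⁻¹ • (Xᵀ * centering n * X)).PosDef)
    (hZ : ((n : ℝ)⁻¹ • (Zᵀ * centering n * Z)).PosDef) :
    (singularValuesMultiset (CCAdagger X Z)).filter (fun x => x ≠ 0) =
      (singularValuesMultiset (CCA X Z)).filter (fun x => x ≠ 0) := by
  classical
  have hX' : ((n : ℝ)⁻¹ • (Xᵀ * (centering n * X))).PosDef := by
    rw [← Matrix.mul_assoc]; exact hX
  have hZ' : ((n : ℝ)⁻¹ • (Zᵀ * (centering n * Z))).PosDef := by
    rw [← Matrix.mul_assoc]; exact hZ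
  set A : Matrix (Fin d) (Fin d) ℝ := (n : ℝ)⁻¹ • (Xᵀ * (centering n * X)) with hAdef
  set S : Matrix (Fin d) (Fin d) ℝ := (open scoped MatrixOrder in CFC.sqrt A) with hSdef
  have hS2 : S * S = A := open scoped MatrixOrder in CFC.sqrt_mul_sqrt_self A hX'.posSemidef.nonneg
  have hSH : S.IsHermitian := open scoped MatrixOrder in (CFC.sqrt_nonneg A).posSemidef.1
  have hSt : Sᵀ = S := by
    rw [← Matrix.conjTranspose_eq_transpose_of_trivial]; exact hSH
  have hAdet : IsUnit A.det := isUnit_iff_ne_zero.mpr (ne_of_gt hX'.det_pos)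
  have hSdet : IsUnit S.det := by
    have h : A.det = S.det * S.det := by rw [← hS2, Matrix.det_mul]
    rw [h] at hAdet
    exact isUnit_of_mul_isUnit_left hAdet
  have hXtXdet : IsUnit (Xᵀ * X).det := by
    have hr : (Xᵀ * X).rank = d := by rw [Matrix.rank_transpose_mul_self, hrank]
    have htop : LinearMap.range (Xᵀ * X).mulVecLin = ⊤ := by
      apply Submodule.eq_top_of_finrank_eq
      rw [Matrix.rank] at hr
      simpa using hr
    have hinj : Function.Injective (Xᵀ * X).mulVecLin :=
      (LinearMap.injective_iff_surjective).mpr (LinearMap.range_eq_top.mp htop)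
    have hinj' : Function.Injective (Xᵀ * X).mulVec := by
      intro a b hab
      apply hinj
      rw [Matrix.mulVecLin_apply, Matrix.mulVecLin_apply]
      exact hab
    exact (Matrix.isUnit_iff_isUnit_det _).mp (Matrix.mulVec_injective_iff_isUnit.mp hinj')
  set Y : Matrix (Fin n) (Fin d) ℝ := X * S with hYdef
  have hYt : Yᵀ = S * Xᵀ := by rw [hYdef, Matrix.transpose_mul, hSt]
  have hGdet : IsUnit (Yᵀ * Y).det := by
    have h : Yᵀ * Y = S * (Xᵀ * X) * S := by
      rw [hYt, hYdef]; simp only [Matrix.mul_assoc]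
    rw [h, Matrix.det_mul, Matrix.det_mul]
    exact (hSdet.mul hXtXdet).mul hSdet
  have hHY : (n : ℝ)⁻¹ • (X * Xᵀ * centering n * X * Xᵀ) = Y * Yᵀ := by
    have h : Y * Yᵀ = X * (S * S) * Xᵀ := by
      rw [hYt, hYdef]; simp only [Matrix.mul_assoc]
    rw [h, hS2, hAdef]
    simp only [Matrix.mul_smul, Matrix.smul_mul, Matrix.mul_assoc]
  have hYYpsd : (Y * Yᵀ).PosSemidef := by
    have h := Matrix.posSemidef_self_mul_conjTranspose Y
    rwa [Matrix.conjTranspose_eq_transpose_of_trivial] at h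
  have hYYH : (Y * Yᵀ).IsHermitian := hYYpsd.1
  have hPt : (pinvSqrt (Y * Yᵀ))ᵀ = pinvSqrt (Y * Yᵀ) := pinvSqrt_transpose hYYH
  have kp : Yᵀ * (pinvSqrt (Y * Yᵀ) * pinvSqrt (Y * Yᵀ)) * Y = 1 := key_proj Y hGdet
  have kp' : S * (Xᵀ * (pinvSqrt (Y * Yᵀ) * pinvSqrt (Y * Yᵀ)) * X) * S = 1 := by
    rw [← kp, hYt, hYdef]; simp only [Matrix.mul_assoc]
  have hSinv1 : S⁻¹ * S = 1 := Matrix.nonsing_inv_mul _ hSdet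
  have hSinv2 : S * S⁻¹ = 1 := Matrix.mul_nonsing_inv _ hSdet
  have key1 : Xᵀ * (pinvSqrt (Y * Yᵀ) * pinvSqrt (Y * Yᵀ)) * X = A⁻¹ := by
    have hAinv : A⁻¹ = S⁻¹ * S⁻¹ := by rw [← hS2, Matrix.mul_inv_rev]
    set T := Xᵀ * (pinvSqrt (Y * Yᵀ) * pinvSqrt (Y * Yᵀ)) * X with hT
    calc T = 1 * T * 1 := by rw [Matrix.one_mul, Matrix.mul_one]
      _ = (S⁻¹ * S) * T * (S * S⁻¹) := by rw [hSinv1, hSinv2]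
      _ = S⁻¹ * (S * T * S) * S⁻¹ := by simp only [Matrix.mul_assoc]
      _ = S⁻¹ * 1 * S⁻¹ := by rw [kp']
      _ = A⁻¹ := by rw [Matrix.mul_one, hAinv]
  have key2 : invSqrt A * invSqrt A = A⁻¹ := invSqrt_mul_invSqrt hX'
  have key' : ∀ {q : ℕ} (W : Matrix (Fin d) (Fin q) ℝ),
      Xᵀ * (pinvSqrt (Y * Yᵀ) * (pinvSqrt (Y * Yᵀ) * (X * W)))
        = invSqrt A * (invSqrt A * W) := by
    intro q W
    calc Xᵀ * (pinvSqrt (Y * Yᵀ) * (pinvSqrt (Y * Yᵀ) * (X * W)))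
        = (Xᵀ * (pinvSqrt (Y * Yᵀ) * pinvSqrt (Y * Yᵀ)) * X) * W := by
          simp only [Matrix.mul_assoc]
      _ = A⁻¹ * W := by rw [key1]
      _ = (invSqrt A * invSqrt A) * W := by rw [key2]
      _ = _ := by simp only [Matrix.mul_assoc]
  have hRt : (invSqrt ((n : ℝ)⁻¹ • (Zᵀ * (centering n * Z))))ᵀ
      = invSqrt ((n : ℝ)⁻¹ • (Zᵀ * (centering n * Z))) := invSqrt_transpose hZ'.1
  have hiAt : (invSqrt A)ᵀ = invSqrt A := invSqrt_transpose hX'.1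
  have hB : (n : ℝ)⁻¹ • (X * Xᵀ * centering n * Z)
      = X * ((n : ℝ)⁻¹ • (Xᵀ * centering n * Z)) := by
    simp only [Matrix.mul_smul, Matrix.mul_assoc]
  have hmain : (CCAdagger X Z)ᵀ * CCAdagger X Z = (CCA X Z)ᵀ * CCA X Z := by
    rw [CCAdagger, CCA, hHY, hB]
    simp only [Matrix.transpose_mul, Matrix.transpose_smul, Matrix.smul_mul,
      Matrix.mul_smul, Matrix.mul_assoc, Matrix.transpose_transpose,
      centering_transpose, hPt, hRt]
    rw [← hAdef] at *
    simp only [hiAt, key']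
  have hsv : singularValuesMultiset (CCAdagger X Z) = singularValuesMultiset (CCA X Z) := by
    unfold singularValuesMultiset
    rw [eigenvalues_congr _ _ (Matrix.isHermitian_conjTranspose_mul_self (CCAdagger X Z))
      (Matrix.isHermitian_conjTranspose_mul_self (CCA X Z))
      (by simp only [Matrix.conjTranspose_eq_transpose_of_trivial]; exact hmain)]
  rw [hsv]
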